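/- For fixed N and 0 ≤ k ≤ N, the family of functions (1−c)^{N−k}·P_k^{(2(N−k)+3,0)}(2c−1), for k = 0,…,N (viewed as polynomials in c), and the family B_k^N(c), for k = 0,…,N, span the same (N+1)-dimensional space of polynomials of degree at most N. -/

import Mathlib

/-- The 1D Bernstein polynomial `B_k^N(x) = C(N,k) x^k (1-x)^(N-k)`. -/
noncomputable def bern (N k : ℕ) (x : ℝ) : ℝ :=
  (N.choose k : ℝ) * x ^ k * (1 - x) ^ (N - k)

/-- The Jacobi polynomial `P_n^{(α,0)}` with natural parameter `α`, via the explicit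
formula `P_n^{(α,β)}(x) = ∑_s C(n+α, n-s) C(n+β, s) ((x-1)/2)^s ((x+1)/2)^{n-s}`. -/
noncomputable def jacobiP (n α : ℕ) (x : ℝ) : ℝ :=
  ∑ s ∈ Finset.range (n + 1),
    ((n + α).choose (n - s) : ℝ) * (n.choose s : ℝ) * ((x - 1) / 2) ^ s * ((x + 1) / 2) ^ (n - s)

lemma span_triangular {F : Type*} [AddCommGroup F] [Module ℝ F] {n : ℕ}
    (v b : Fin n → F) (μ : Fin n → ℕ)
    (h : ∀ k, ∃ u : ℝ, u ≠ 0 ∧ v k - u • b k ∈ Submodule.span ℝ (b '' {j | μ j < μ k})) :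
    Submodule.span ℝ (Set.range v) = Submodule.span ℝ (Set.range b) := by
  apply le_antisymm
  · rw [Submodule.span_le]
    rintro _ ⟨k, rfl⟩
    obtain ⟨u, hu, hm⟩ := h k
    have h1 : v k - u • b k ∈ Submodule.span ℝ (Set.range b) :=
      Submodule.span_mono (Set.image_subset_range _ _) hm
    have h2 : u • b k ∈ Submodule.span ℝ (Set.range b) :=
      Submodule.smul_mem _ _ (Submodule.subset_span ⟨k, rfl⟩)
    have := Submodule.add_mem _ h1 h2
    simpa using this
  · rw [Submodule.span_le]
    rintro _ ⟨k, rfl⟩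
    have key : ∀ m : ℕ, ∀ k : Fin n, μ k < m → b k ∈ Submodule.span ℝ (Set.range v) := by
      intro m
      induction m with
      | zero => intro k hk; omega
      | succ m ih =>
        intro k hk
        obtain ⟨u, hu, hm⟩ := h k
        have hsub : Submodule.span ℝ (b '' {j | μ j < μ k}) ≤ Submodule.span ℝ (Set.range v) := by
          rw [Submodule.span_le]
          rintro _ ⟨j, hj, rfl⟩
          simp only [Set.mem_setOf_eq] at hj
          exact ih j (by omega)
        have h1 : v k - u • b k ∈ Submodule.span ℝ (Set.range v) := hsub hm
        have h2 : v k ∈ Submodule.span ℝ (Set.range v) := Submodule.subset_span ⟨k, rfl⟩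
        have h3 : u • b k ∈ Submodule.span ℝ (Set.range v) := by
          have := Submodule.sub_mem _ h2 h1; simpa using this
        have := Submodule.smul_mem _ u⁻¹ h3
        rwa [smul_smul, inv_mul_cancel₀ hu, one_smul] at this
    exact key (μ k + 1) k (Nat.lt_succ_self _)

noncomputable def evalL : Polynomial ℝ →ₗ[ℝ] (ℝ → ℝ) where
  toFun p := fun x => p.eval x
  map_add' p q := by funext x; simp
  map_smul' a p := by funext x; simp

theorem jacobi_bernstein_same_span (N : ℕ) :
    Submodule.span ℝ
        (Set.range fun k : Fin (N + 1) =>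
          fun c : ℝ => (1 - c) ^ (N - (k : ℕ)) * jacobiP k (2 * (N - (k : ℕ)) + 3) (2 * c - 1)) =
      Submodule.span ℝ (Set.range fun k : Fin (N + 1) => fun c : ℝ => bern N k c) ∧
    Submodule.span ℝ (Set.range fun k : Fin (N + 1) => fun c : ℝ => bern N k c) =
      Submodule.span ℝ (Set.range fun m : Fin (N + 1) => fun c : ℝ => c ^ (m : ℕ)) ∧
    Module.finrank ℝ
        (Submodule.span ℝ (Set.range fun k : Fin (N + 1) => fun c : ℝ => bern N k c)) =
      N + 1 := by
  set e : Fin (N + 1) → (ℝ → ℝ) := fun m => fun c : ℝ => c ^ (m : ℕ) with he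
  set b : Fin (N + 1) → (ℝ → ℝ) := fun k => fun c : ℝ => c ^ (k : ℕ) * (1 - c) ^ (N - (k : ℕ))
    with hbdef
  -- Bernstein vs b
  have hgb : Submodule.span ℝ (Set.range fun k : Fin (N + 1) => fun c : ℝ => bern N k c) =
      Submodule.span ℝ (Set.range b) := by
    apply span_triangular _ _ (fun k => (k : ℕ))
    intro k
    refine ⟨(N.choose k : ℝ), ?_, ?_⟩
    · exact_mod_cast (Nat.choose_pos (by omega : (k : ℕ) ≤ N)).ne'
    · have hfun : (fun c : ℝ => bern N k c) = (N.choose k : ℝ) • b k := by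
        funext c
        simp [bern, hbdef, mul_assoc]
      rw [hfun, sub_self]
      exact Submodule.zero_mem _
  -- Jacobi vs b
  have hfb : Submodule.span ℝ
      (Set.range fun k : Fin (N + 1) =>
        fun c : ℝ => (1 - c) ^ (N - (k : ℕ)) * jacobiP k (2 * (N - (k : ℕ)) + 3) (2 * c - 1)) =
      Submodule.span ℝ (Set.range b) := by
    apply span_triangular _ _ (fun k => (k : ℕ))
    intro k
    set α : ℕ := 2 * (N - (k : ℕ)) + 3 with hα
    have hkN : (k : ℕ) ≤ N := by omega
    have hexp : (fun c : ℝ => (1 - c) ^ (N - (k : ℕ)) * jacobiP k α (2 * c - 1))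
        = ∑ s ∈ Finset.range ((k : ℕ) + 1),
            ((-1 : ℝ) ^ s * (((k : ℕ) + α).choose ((k : ℕ) - s) : ℝ) * ((k : ℕ).choose s : ℝ)) •
              b ⟨(k : ℕ) - s, by omega⟩ := by
      funext c
      rw [Finset.sum_apply]
      unfold jacobiP
      rw [Finset.mul_sum]
      apply Finset.sum_congr rfl
      intro s hs
      have hs' : s ≤ (k : ℕ) := Nat.lt_succ_iff.mp (Finset.mem_range.mp hs)
      simp only [hbdef, Pi.smul_apply, smul_eq_mul]
      have h1 : (2 * c - 1 - 1) / 2 = c - 1 := by ring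
      have h2 : (2 * c - 1 + 1) / 2 = c := by ring
      rw [h1, h2]
      have h3 : (c - 1) ^ s = (-1 : ℝ) ^ s * (1 - c) ^ s := by
        rw [show c - 1 = -(1 - c) by ring, neg_pow]
      have h4 : N - ((k : ℕ) - s) = (N - (k : ℕ)) + s := by omega
      rw [h3, h4, pow_add]
      ring
    refine ⟨(((k : ℕ) + α).choose (k : ℕ) : ℝ), ?_, ?_⟩
    · exact_mod_cast (Nat.choose_pos (by omega)).ne'
    · rw [hexp, Finset.sum_range_succ']
      have hg0 : ((-1 : ℝ) ^ 0 * (((k : ℕ) + α).choose ((k : ℕ) - 0) : ℝ) *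
            ((k : ℕ).choose 0 : ℝ)) • b ⟨(k : ℕ) - 0, by omega⟩
          = (((k : ℕ) + α).choose (k : ℕ) : ℝ) • b k := by
        simp
      rw [hg0, add_sub_cancel_right]
      apply Submodule.sum_mem
      intro s hs
      have hs' : s < (k : ℕ) := Finset.mem_range.mp hs
      apply Submodule.smul_mem
      apply Submodule.subset_span
      exact ⟨⟨(k : ℕ) - (s + 1), by omega⟩, by simp only [Set.mem_setOf_eq, Fin.val_mk]; omega, rfl⟩
  -- b vs monomials
  have hbe : Submodule.span ℝ (Set.range b) = Submodule.span ℝ (Set.range e) := by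
    apply span_triangular _ _ (fun k => N - (k : ℕ))
    intro k
    have hkN : (k : ℕ) ≤ N := by omega
    set n : ℕ := N - (k : ℕ) with hn
    have hexp : b k = ∑ i ∈ Finset.range (n + 1),
        ((-1 : ℝ) ^ i * (n.choose i : ℝ)) • e ⟨(k : ℕ) + min i n, by omega⟩ := by
      funext c
      rw [Finset.sum_apply]
      simp only [hbdef, he, Pi.smul_apply, smul_eq_mul]
      have h5 : (1 - c) ^ n = ∑ i ∈ Finset.range (n + 1), (-c) ^ i * (n.choose i : ℝ) := by
        rw [show (1 : ℝ) - c = -c + 1 by ring, add_pow]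
        simp
      rw [h5, Finset.mul_sum]
      apply Finset.sum_congr rfl
      intro i hi
      have hi' : i ≤ n := Nat.lt_succ_iff.mp (Finset.mem_range.mp hi)
      rw [min_eq_left hi']
      rw [show (-c) ^ i = (-1 : ℝ) ^ i * c ^ i by rw [neg_pow]]
      rw [pow_add]
      ring
    refine ⟨1, one_ne_zero, ?_⟩
    rw [hexp, Finset.sum_range_succ']
    have hg0 : ((-1 : ℝ) ^ 0 * (n.choose 0 : ℝ)) • e ⟨(k : ℕ) + min 0 n, by omega⟩
        = (1 : ℝ) • e k := by
      simp
    rw [hg0, add_sub_cancel_right]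
    apply Submodule.sum_mem
    intro i hi
    have hi' : i < n := Finset.mem_range.mp hi
    apply Submodule.smul_mem
    apply Submodule.subset_span
    refine ⟨⟨(k : ℕ) + min (i + 1) n, by omega⟩, ?_, rfl⟩
    simp only [Set.mem_setOf_eq]
    have : min (i + 1) n = i + 1 := min_eq_left (by omega)
    rw [this]
    omega
  -- linear independence of monomials
  have hli : LinearIndependent ℝ e := by
    have hinj : Function.Injective evalL := by
      intro p q h
      apply Polynomial.funext
      intro x
      exact congrFun h x
    have hmon : LinearIndependent ℝ (fun m : Fin (N + 1) => (Polynomial.X : Polynomial ℝ) ^ (m : ℕ)) := by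
      have := (Polynomial.basisMonomials ℝ).linearIndependent.comp
        (fun m : Fin (N + 1) => (m : ℕ)) Fin.val_injective
      simpa [Polynomial.coe_basisMonomials, Function.comp_def,
        ← Polynomial.X_pow_eq_monomial] using this
    have := hmon.map' evalL (LinearMap.ker_eq_bot.mpr hinj)
    convert this using 1
    funext m
    funext c
    simp [he, evalL]
    all_goals rfl
  have hrank : Module.finrank ℝ (Submodule.span ℝ (Set.range e)) = N + 1 := by
    rw [finrank_span_eq_card hli]
    simp
  exact ⟨hfb.trans hgb.symm, hgb.trans hbe, by rw [hgb, hbe]; exact hrank⟩
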